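/- For α ∈ (0, 1/2), the function f with f'(r) = ((1 + ((1-2α)/(2α))·r²)^{2α/(1-2α)} - 1)^{1/2} satisfies f(r)/r^{1/(1-2α)} → (1-2α)·((1-2α)/(2α))^{α/(1-2α)} as r → ∞. -/

import Mathlib

open Filter

/-- Comparison of functions from comparison of derivatives on `[T, ∞)`. -/
lemma my_mono_sub (T : ℝ) (u v u' v' : ℝ → ℝ)
    (hu : ∀ r ≥ T, HasDerivAt u (u' r) r) (hv : ∀ r ≥ T, HasDerivAt v (v' r) r)
    (h : ∀ r ≥ T, u' r ≤ v' r) : ∀ r ≥ T, u r - u T ≤ v r - v T := by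
  intro r hr
  have hmono : MonotoneOn (fun t => v t - u t) (Set.Ici T) := by
    apply monotoneOn_of_deriv_nonneg (convex_Ici T)
    · intro x hx
      exact ((hv x hx).sub (hu x hx)).continuousAt.continuousWithinAt
    · intro x hx
      rw [interior_Ici] at hx
      exact ((hv x hx.le).sub (hu x hx.le)).differentiableAt.differentiableWithinAt
    · intro x hx
      rw [interior_Ici] at hx
      rw [show deriv (fun t => v t - u t) x = v' x - u' x from ((hv x hx.le).sub (hu x hx.le)).deriv]
      linarith [h x hx.le]
  have := hmono (Set.self_mem_Ici) (show r ∈ Set.Ici T from hr) hr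
  simp only at this
  linarith

/-- A version of l'Hôpital for `g r / r^(q+1)` at infinity. -/
lemma my_lhopital (q M : ℝ) (hq : 0 < q) (g g' : ℝ → ℝ)
    (hg : ∀ r > (0 : ℝ), HasDerivAt g (g' r) r)
    (hA : Tendsto (fun r => g' r / r ^ q) atTop (nhds ((q + 1) * M))) :
    Tendsto (fun r => g r / r ^ (q + 1)) atTop (nhds M) := by
  have hq1 : (0 : ℝ) < q + 1 := by linarith
  rw [tendsto_order]
  constructor
  · -- lower bound
    intro c hc
    set ε := M - c with hε
    have hε0 : 0 < ε := by simp [hε]; linarith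
    have h1 : ∀ᶠ r in atTop, (q + 1) * (M - ε / 2) < g' r / r ^ q :=
      hA.eventually_const_lt (by nlinarith)
    obtain ⟨T0, hT0⟩ := eventually_atTop.mp h1
    set T := max T0 1 with hT
    have hT1 : (1 : ℝ) ≤ T := le_max_right _ _
    have hTpos : (0 : ℝ) < T := lt_of_lt_of_le one_pos hT1
    -- derivative comparison
    have hcomp : ∀ r ≥ T, (M - ε / 2) * r ^ (q + 1) - (M - ε / 2) * T ^ (q + 1) ≤ g r - g T := by
      apply my_mono_sub T _ _ (fun r => (M - ε / 2) * ((q + 1) * r ^ q)) g'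
      · intro r hr
        have hr0 : 0 < r := lt_of_lt_of_le hTpos hr
        have := (Real.hasDerivAt_rpow_const (x := r) (p := q + 1) (Or.inl hr0.ne')).const_mul
          (M - ε / 2)
        simpa [add_sub_cancel_right] using this
      · intro r hr
        exact hg r (lt_of_lt_of_le hTpos hr)
      · intro r hr
        have hr0 : 0 < r := lt_of_lt_of_le hTpos hr
        have hrq : 0 < r ^ q := Real.rpow_pos_of_pos hr0 q
        have := hT0 r (le_trans (le_max_left _ _) hr)
        rw [lt_div_iff₀ hrq] at this
        nlinarith
    -- the constant over r^(q+1) tends to 0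
    have hconst : Tendsto (fun r : ℝ => (g T - (M - ε / 2) * T ^ (q + 1)) / r ^ (q + 1))
        atTop (nhds 0) :=
      tendsto_const_nhds.div_atTop (tendsto_rpow_atTop hq1)
    have h2 : ∀ᶠ r in atTop, -(ε / 2) < (g T - (M - ε / 2) * T ^ (q + 1)) / r ^ (q + 1) :=
      hconst.eventually_const_lt (by linarith)
    filter_upwards [h2, eventually_ge_atTop T] with r hr2 hrT
    have hr0 : 0 < r := lt_of_lt_of_le hTpos hrT
    have hrp : 0 < r ^ (q + 1) := Real.rpow_pos_of_pos hr0 _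
    have h3 := hcomp r hrT
    rw [lt_div_iff₀ hrp] at hr2
    rw [lt_div_iff₀ hrp]
    nlinarith
  · -- upper bound
    intro c hc
    set ε := c - M with hε
    have hε0 : 0 < ε := by simp [hε]; linarith
    have h1 : ∀ᶠ r in atTop, g' r / r ^ q < (q + 1) * (M + ε / 2) :=
      hA.eventually_lt_const (by nlinarith)
    obtain ⟨T0, hT0⟩ := eventually_atTop.mp h1
    set T := max T0 1 with hT
    have hT1 : (1 : ℝ) ≤ T := le_max_right _ _
    have hTpos : (0 : ℝ) < T := lt_of_lt_of_le one_pos hT1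
    have hcomp : ∀ r ≥ T, g r - g T ≤ (M + ε / 2) * r ^ (q + 1) - (M + ε / 2) * T ^ (q + 1) := by
      apply my_mono_sub T g _ g' (fun r => (M + ε / 2) * ((q + 1) * r ^ q))
      · intro r hr
        exact hg r (lt_of_lt_of_le hTpos hr)
      · intro r hr
        have hr0 : 0 < r := lt_of_lt_of_le hTpos hr
        have := (Real.hasDerivAt_rpow_const (x := r) (p := q + 1) (Or.inl hr0.ne')).const_mul
          (M + ε / 2)
        simpa [add_sub_cancel_right] using this
      · intro r hr
        have hr0 : 0 < r := lt_of_lt_of_le hTpos hr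
        have hrq : 0 < r ^ q := Real.rpow_pos_of_pos hr0 q
        have := hT0 r (le_trans (le_max_left _ _) hr)
        rw [div_lt_iff₀ hrq] at this
        nlinarith
    have hconst : Tendsto (fun r : ℝ => (g T - (M + ε / 2) * T ^ (q + 1)) / r ^ (q + 1))
        atTop (nhds 0) :=
      tendsto_const_nhds.div_atTop (tendsto_rpow_atTop hq1)
    have h2 : ∀ᶠ r in atTop, (g T - (M + ε / 2) * T ^ (q + 1)) / r ^ (q + 1) < ε / 2 :=
      hconst.eventually_lt_const (by linarith)
    filter_upwards [h2, eventually_ge_atTop T] with r hr2 hrT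
    have hr0 : 0 < r := lt_of_lt_of_le hTpos hrT
    have hrp : 0 < r ^ (q + 1) := Real.rpow_pos_of_pos hr0 _
    have h3 := hcomp r hrT
    rw [div_lt_iff₀ hrp] at hr2
    rw [div_lt_iff₀ hrp]
    nlinarith

/-- Rewriting the ratio of the derivative by `r^q` in terms of `1/r²`. -/
lemma my_ratio_eq (β q : ℝ) (hβ : 0 < β) (hq : 0 < q) (r : ℝ) (hr : 0 < r) :
    ((1 + β * r ^ 2) ^ q - 1) ^ ((1 : ℝ) / 2) / r ^ q
      = ((β + r⁻¹ ^ 2) ^ q - (r⁻¹ ^ 2) ^ q) ^ ((1 : ℝ) / 2) := by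
  have hr2 : (0 : ℝ) < r ^ 2 := by positivity
  have h1 : (1 : ℝ) ≤ 1 + β * r ^ 2 := by nlinarith
  have hA1 : (1 : ℝ) ≤ (1 + β * r ^ 2) ^ q := Real.one_le_rpow h1 hq.le
  have e1 : β + r⁻¹ ^ 2 = (1 + β * r ^ 2) / r ^ 2 := by field_simp; ring
  have e2 : (r⁻¹ ^ 2 : ℝ) = 1 / r ^ 2 := by field_simp
  rw [e1, e2, Real.div_rpow (by positivity) hr2.le, Real.div_rpow (by norm_num) hr2.le,
    Real.one_rpow, div_sub_div_same,
    Real.div_rpow (by linarith) (by positivity)]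
  have hre : ((r ^ 2 : ℝ) ^ q) ^ ((1 : ℝ) / 2) = r ^ q := by
    rw [← Real.rpow_natCast r 2, ← Real.rpow_mul hr.le, ← Real.rpow_mul hr.le]
    congr 1
    ring
  rw [hre]

/-- Asymptotic behaviour of the rotational `K^α`-translator meeting the axis,
`α ∈ (0, 1/2)`:  `f(r)/r^{1/(1-2α)} → (1-2α)((1-2α)/(2α))^{α/(1-2α)}`. -/
theorem stmt_5 (α : ℝ) (hα : α ∈ Set.Ioo (0 : ℝ) (1 / 2)) (f : ℝ → ℝ)
    (hf0 : f 0 = 0)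
    (hf : ∀ r > (0 : ℝ), HasDerivAt f
      (((1 + (1 - 2 * α) / (2 * α) * r ^ 2) ^ (2 * α / (1 - 2 * α)) - 1) ^ ((1 : ℝ) / 2)) r) :
    Tendsto (fun r => f r / r ^ ((1 : ℝ) / (1 - 2 * α))) atTop
      (nhds ((1 - 2 * α) * ((1 - 2 * α) / (2 * α)) ^ (α / (1 - 2 * α)))) := by
  obtain ⟨hα0, hα2⟩ := hα
  have h12 : (0 : ℝ) < 1 - 2 * α := by linarith
  have h2a : (0 : ℝ) < 2 * α := by linarith
  set β := (1 - 2 * α) / (2 * α) with hβdef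
  have hβ0 : 0 < β := by positivity
  set q := 2 * α / (1 - 2 * α) with hqdef
  have hq0 : 0 < q := by positivity
  have hq1 : (1 : ℝ) / (1 - 2 * α) = q + 1 := by rw [hqdef]; field_simp; ring
  have hq2 : α / (1 - 2 * α) = q / 2 := by rw [hqdef]; ring
  set M := (1 - 2 * α) * β ^ (α / (1 - 2 * α)) with hMdef
  have hqM : (q + 1) * M = β ^ (q / 2) := by
    rw [hMdef, hq2, ← hq1]
    field_simp
  simp only [hq1]
  apply my_lhopital q M hq0 f
    (fun r => ((1 + β * r ^ 2) ^ q - 1) ^ ((1 : ℝ) / 2)) hf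
  -- limit of the derivative ratio
  have h0 : Tendsto (fun r : ℝ => r⁻¹ ^ 2) atTop (nhds 0) := by
    have : Tendsto (fun r : ℝ => r⁻¹ ^ 2) atTop (nhds (0 ^ 2)) :=
      tendsto_inv_atTop_zero.pow 2
    simpa using this
  have hcont : ContinuousAt (fun x : ℝ => ((β + x) ^ q - x ^ q) ^ ((1 : ℝ) / 2)) 0 := by
    have c1 : ContinuousAt (fun x : ℝ => (β + x) ^ q) 0 :=
      ContinuousAt.rpow_const ((continuous_const.add continuous_id).continuousAt)
        (Or.inl (by positivity))
    have c2 : ContinuousAt (fun x : ℝ => x ^ q) 0 :=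
      Real.continuousAt_rpow_const 0 q (Or.inr hq0.le)
    have c3 : ContinuousAt (fun x : ℝ => (β + x) ^ q - x ^ q) 0 := c1.sub c2
    exact ContinuousAt.rpow_const c3 (Or.inr (by norm_num))
  have key : Tendsto (fun r : ℝ => ((β + r⁻¹ ^ 2) ^ q - (r⁻¹ ^ 2) ^ q) ^ ((1 : ℝ) / 2))
      atTop (nhds (β ^ (q / 2))) := by
    have := hcont.tendsto.comp h0
    have hval : ((β + 0) ^ q - (0 : ℝ) ^ q) ^ ((1 : ℝ) / 2) = β ^ (q / 2) := by
      rw [add_zero, Real.zero_rpow hq0.ne', sub_zero, ← Real.rpow_mul hβ0.le]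
      congr 1
      ring
    rw [hval] at this
    exact this
  rw [hqM]
  apply key.congr'
  filter_upwards [eventually_gt_atTop 0] with r hr
  exact (my_ratio_eq β q hβ0 hq0 r hr).symm
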